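/- Let H be a finite connected simple graph with no false twins on exactly 8 vertices, and let B be a biclique of H whose two parts each have exactly 3 vertices (B is isomorphic to K_{3,3}). Then at least 4 bicliques of H distinct from B have nonempty intersection with B; equivalently, the vertex of KB(H) corresponding to B has degree at least 4. -/

import Mathlib

open SimpleGraph

variable {V : Type}

/-- `B1`, `B2` are the two (nonempty) parts of an induced complete bipartite subgraph:
they are disjoint, each part is independent, and all edges between the parts are present. -/
def IsCBP (H : SimpleGraph V) (B1 B2 : Set V) : Prop :=
  B1.Nonempty ∧ B2.Nonempty ∧ Disjoint B1 B2 ∧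
    (∀ a ∈ B1, ∀ b ∈ B1, ¬H.Adj a b) ∧
    (∀ a ∈ B2, ∀ b ∈ B2, ¬H.Adj a b) ∧
    (∀ a ∈ B1, ∀ b ∈ B2, H.Adj a b)

/-- A set of vertices inducing a complete bipartite subgraph `K_{m,n}`, `m, n ≥ 1`. -/
def IsCompleteBipartiteSet (H : SimpleGraph V) (S : Set V) : Prop :=
  ∃ B1 B2 : Set V, IsCBP H B1 B2 ∧ B1 ∪ B2 = S

/-- A biclique: a maximal set of vertices inducing a complete bipartite subgraph. -/
def IsBiclique (H : SimpleGraph V) (S : Set V) : Prop :=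
  IsCompleteBipartiteSet H S ∧
    ∀ T : Set V, IsCompleteBipartiteSet H T → S ⊆ T → S = T

/-- The biclique graph `KB(H)`: the intersection graph of the bicliques of `H`. -/
def KB (H : SimpleGraph V) : SimpleGraph {S : Set V // IsBiclique H S} :=
  SimpleGraph.fromRel fun A B => (A.1 ∩ B.1).Nonempty

section Helpers

variable {H : SimpleGraph V}

/-- In a complete bipartite set, two vertices with a common neighbor are nonadjacent. -/
lemma cbp_L1 {S : Set V} (h : IsCompleteBipartiteSet H S) {u v w : V}
    (hu : u ∈ S) (hv : v ∈ S) (hw : w ∈ S)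
    (huv : H.Adj u v) (huw : H.Adj u w) : ¬H.Adj v w := by
  obtain ⟨P, Q, ⟨-, -, -, hP, hQ, hPQ⟩, rfl⟩ := h
  rcases hu with hu | hu
  · have hvQ : v ∈ Q := by
      rcases hv with hv | hv
      · exact absurd huv (hP u hu v hv)
      · exact hv
    have hwQ : w ∈ Q := by
      rcases hw with hw | hw
      · exact absurd huw (hP u hu w hw)
      · exact hw
    exact hQ v hvQ w hwQ
  · have hvP : v ∈ P := by
      rcases hv with hv | hv
      · exact hv
      · exact absurd huv (hQ u hu v hv)
    have hwP : w ∈ P := by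
      rcases hw with hw | hw
      · exact hw
      · exact absurd huw (hQ u hu w hw)
    exact hP v hvP w hwP

/-- In a complete bipartite set, if `u ~ v` and `u ≁ w` then `v ~ w`. -/
lemma cbp_L2 {S : Set V} (h : IsCompleteBipartiteSet H S) {u v w : V}
    (hu : u ∈ S) (hv : v ∈ S) (hw : w ∈ S)
    (huv : H.Adj u v) (huw : ¬H.Adj u w) : H.Adj v w := by
  obtain ⟨P, Q, ⟨-, -, -, hP, hQ, hPQ⟩, rfl⟩ := h
  rcases hu with hu | hu
  · have hvQ : v ∈ Q := by
      rcases hv with hv | hv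
      · exact absurd huv (hP u hu v hv)
      · exact hv
    have hwP : w ∈ P := by
      rcases hw with hw | hw
      · exact hw
      · exact absurd (hPQ u hu w hw) huw
    exact (hPQ w hwP v hvQ).symm
  · have hvP : v ∈ P := by
      rcases hv with hv | hv
      · exact hv
      · exact absurd huv (hQ u hu v hv)
    have hwQ : w ∈ Q := by
      rcases hw with hw | hw
      · exact absurd ((hPQ w hw u hu).symm) huw
      · exact hw
    exact hPQ v hvP w hwQ

lemma edge_cbp {u v : V} (h : H.Adj u v) : IsCompleteBipartiteSet H {u, v} := by
  refine ⟨{u}, {v}, ⟨⟨u, rfl⟩, ⟨v, rfl⟩, ?_, ?_, ?_, ?_⟩, ?_⟩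
  · simp [Set.disjoint_singleton_left, h.ne]
  · intro a ha b hb
    simp only [Set.mem_singleton_iff] at ha hb
    subst ha; subst hb; exact H.irrefl
  · intro a ha b hb
    simp only [Set.mem_singleton_iff] at ha hb
    subst ha; subst hb; exact H.irrefl
  · intro a ha b hb
    simp only [Set.mem_singleton_iff] at ha hb
    subst ha; subst hb; exact h
  · rw [Set.singleton_union]

lemma path_cbp {a x b : V} (hax : H.Adj a x) (hab : H.Adj a b) (hxb : ¬H.Adj x b) :
    IsCompleteBipartiteSet H {a, x, b} := by
  refine ⟨{a}, {x, b}, ⟨⟨a, rfl⟩, ⟨x, by simp⟩, ?_, ?_, ?_, ?_⟩, ?_⟩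
  · simp [Set.disjoint_singleton_left, hax.ne, hab.ne]
  · intro c hc d hd
    simp only [Set.mem_singleton_iff] at hc hd
    subst hc; subst hd; exact H.irrefl
  · intro c hc d hd
    simp only [Set.mem_insert_iff, Set.mem_singleton_iff] at hc hd
    rcases hc with rfl | rfl <;> rcases hd with rfl | rfl
    · exact H.irrefl
    · exact hxb
    · exact fun h => hxb h.symm
    · exact H.irrefl
  · intro c hc d hd
    simp only [Set.mem_singleton_iff] at hc
    simp only [Set.mem_insert_iff, Set.mem_singleton_iff] at hd
    subst hc
    rcases hd with rfl | rfl
    · exact hax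
    · exact hab
  · rw [Set.singleton_union]

lemma exists_biclique_superset [Fintype V] {S : Set V}
    (h : IsCompleteBipartiteSet H S) : ∃ T : Set V, IsBiclique H T ∧ S ⊆ T := by
  classical
  have hfin : {T : Set V | IsCompleteBipartiteSet H T ∧ S ⊆ T}.Finite := Set.toFinite _
  obtain ⟨T, hTmem, hmax⟩ :=
    Set.Finite.exists_maximalFor Set.ncard _ hfin ⟨S, h, Set.Subset.rfl⟩
  refine ⟨T, ⟨hTmem.1, ?_⟩, hTmem.2⟩
  intro T' hT' hTT'
  have hT'mem : T' ∈ {T : Set V | IsCompleteBipartiteSet H T ∧ S ⊆ T} :=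
    ⟨hT', hTmem.2.trans hTT'⟩
  have hle : T.ncard ≤ T'.ncard := Set.ncard_le_ncard hTT' (Set.toFinite _)
  have heq := hmax hT'mem hle
  exact Set.eq_of_subset_of_ncard_le hTT' heq.ge (Set.toFinite _)

lemma four_le_ncard {α : Type} {s : Set α} (hfin : s.Finite) {a b c d : α}
    (ha : a ∈ s) (hb : b ∈ s) (hc : c ∈ s) (hd : d ∈ s)
    (hab : a ≠ b) (hac : a ≠ c) (had : a ≠ d) (hbc : b ≠ c) (hbd : b ≠ d) (hcd : c ≠ d) :
    4 ≤ s.ncard := by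
  have f1 : ({d} : Set α).Finite := Set.finite_singleton d
  have f2 : ({c, d} : Set α).Finite := f1.insert c
  have f3 : ({b, c, d} : Set α).Finite := f2.insert b
  have h4 : ({a, b, c, d} : Set α).ncard = 4 := by
    rw [Set.ncard_insert_of_notMem (by simp [hab, hac, had]) f3,
        Set.ncard_insert_of_notMem (by simp [hbc, hbd]) f2,
        Set.ncard_insert_of_notMem (by simp [hcd]) f1,
        Set.ncard_singleton]
  have hsub : ({a, b, c, d} : Set α) ⊆ s := by
    intro z hz
    simp only [Set.mem_insert_iff, Set.mem_singleton_iff] at hz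
    rcases hz with rfl | rfl | rfl | rfl <;> assumption
  calc 4 = ({a, b, c, d} : Set α).ncard := h4.symm
    _ ≤ s.ncard := Set.ncard_le_ncard hsub hfin

set_option maxHeartbeats 1000000 in
lemma three_traces {α : Type} {s : Set α} (hs : s.ncard = 3) (p q : α → Prop)
    (hdist : ∀ a ∈ s, ∀ b ∈ s, a ≠ b → ¬((p a ↔ p b) ∧ (q a ↔ q b))) :
    ∃ a ∈ s, p a := by
  obtain ⟨u, v, w, huv, huw, hvw, rfl⟩ := Set.ncard_eq_three.mp hs
  have h1 := hdist u (by simp) v (by simp) huv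
  have h2 := hdist u (by simp) w (by simp) huw
  have h3 := hdist v (by simp) w (by simp) hvw
  have key : p u ∨ p v ∨ p w := by
    by_cases hpu : p u <;> by_cases hpv : p v <;> by_cases hpw : p w <;>
      by_cases hqu : q u <;> by_cases hqv : q v <;> by_cases hqw : q w <;> simp_all
  rcases key with h | h | h
  · exact ⟨u, by simp, h⟩
  · exact ⟨v, by simp, h⟩
  · exact ⟨w, by simp, h⟩

set_option maxHeartbeats 1000000 in
lemma three_traces_empty {α : Type} {s : Set α} (hs : s.ncard = 3) (p q : α → Prop)
    (hdist : ∀ a ∈ s, ∀ b ∈ s, a ≠ b → ¬((p a ↔ p b) ∧ (q a ↔ q b)))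
    (hnand : ∀ a ∈ s, ¬(p a ∧ q a)) :
    ∃ a ∈ s, ¬p a ∧ ¬q a := by
  obtain ⟨u, v, w, huv, huw, hvw, rfl⟩ := Set.ncard_eq_three.mp hs
  have h1 := hdist u (by simp) v (by simp) huv
  have h2 := hdist u (by simp) w (by simp) huw
  have h3 := hdist v (by simp) w (by simp) hvw
  have hu := hnand u (by simp)
  have hv := hnand v (by simp)
  have hw := hnand w (by simp)
  have key : (¬p u ∧ ¬q u) ∨ (¬p v ∧ ¬q v) ∨ (¬p w ∧ ¬q w) := by
    by_cases hpu : p u <;> by_cases hpv : p v <;> by_cases hpw : p w <;>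
      by_cases hqu : q u <;> by_cases hqv : q v <;> by_cases hqw : q w <;> simp_all
  rcases key with h | h | h
  · exact ⟨u, by simp, h⟩
  · exact ⟨v, by simp, h⟩
  · exact ⟨w, by simp, h⟩

set_option maxHeartbeats 1000000 in
lemma three_pair {α : Type} {s : Set α} (hs : s.ncard = 3) (p q : α → Prop)
    (hdist : ∀ a ∈ s, ∀ b ∈ s, a ≠ b → ¬((p a ↔ p b) ∧ (q a ↔ q b))) :
    ∃ a ∈ s, ∃ b ∈ s, p a ∧ q b ∧ a ≠ b ∧ (¬p b ∨ ¬q a) := by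
  obtain ⟨u, v, w, huv, huw, hvw, rfl⟩ := Set.ncard_eq_three.mp hs
  have h1 := hdist u (by simp) v (by simp) huv
  have h2 := hdist u (by simp) w (by simp) huw
  have h3 := hdist v (by simp) w (by simp) hvw
  have key : (p u ∧ q v ∧ (¬p v ∨ ¬q u)) ∨ (p u ∧ q w ∧ (¬p w ∨ ¬q u)) ∨
      (p v ∧ q u ∧ (¬p u ∨ ¬q v)) ∨ (p v ∧ q w ∧ (¬p w ∨ ¬q v)) ∨
      (p w ∧ q u ∧ (¬p u ∨ ¬q w)) ∨ (p w ∧ q v ∧ (¬p v ∨ ¬q w)) := by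
    by_cases hpu : p u <;> by_cases hpv : p v <;> by_cases hpw : p w <;>
      by_cases hqu : q u <;> by_cases hqv : q v <;> by_cases hqw : q w <;> simp_all
  rcases key with h | h | h | h | h | h
  · exact ⟨u, by simp, v, by simp, h.1, h.2.1, huv, h.2.2⟩
  · exact ⟨u, by simp, w, by simp, h.1, h.2.1, huw, h.2.2⟩
  · exact ⟨v, by simp, u, by simp, h.1, h.2.1, huv.symm, h.2.2⟩
  · exact ⟨v, by simp, w, by simp, h.1, h.2.1, hvw, h.2.2⟩
  · exact ⟨w, by simp, u, by simp, h.1, h.2.1, huw.symm, h.2.2⟩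
  · exact ⟨w, by simp, v, by simp, h.1, h.2.1, hvw.symm, h.2.2⟩

end Helpers

/-- In a connected false-twin-free graph on exactly 8 vertices, a `K_{3,3}` biclique
meets at least 4 other bicliques. -/
theorem stmt_9 {V : Type} [Fintype V] (H : SimpleGraph V) (hconn : H.Connected)
    (htwinfree : ∀ v w : V, v ≠ w → H.neighborSet v ≠ H.neighborSet w)
    (hcard : Fintype.card V = 8)
    (B B1 B2 : Set V) (hB : IsBiclique H B)
    (hpart : IsCBP H B1 B2) (hunion : B1 ∪ B2 = B)
    (h1 : B1.ncard = 3) (h2 : B2.ncard = 3) :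
    4 ≤ {S : Set V | IsBiclique H S ∧ S ≠ B ∧ (S ∩ B).Nonempty}.ncard := by
  classical
  obtain ⟨hne1, hne2, hd12, hind1, hind2, hcross⟩ := hpart
  have hBcard : B.ncard = 6 := by
    rw [← hunion, Set.ncard_union_eq hd12 (Set.toFinite _) (Set.toFinite _), h1, h2]
  have hcompl2 : Bᶜ.ncard = 2 := by
    have h := Set.ncard_add_ncard_compl B (Set.toFinite _) (Set.toFinite _)
    rw [Nat.card_eq_fintype_card, hcard, hBcard] at h
    omega
  obtain ⟨x, y, hxy, hxyeq⟩ := Set.ncard_eq_two.mp hcompl2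
  have hxB : x ∉ B := by
    have hx : x ∈ Bᶜ := by rw [hxyeq]; simp
    exact hx
  have hyB : y ∉ B := by
    have hy : y ∈ Bᶜ := by rw [hxyeq]; simp
    exact hy
  have hmemB1 : ∀ v ∈ B1, v ∈ B := fun v hv => by rw [← hunion]; exact Or.inl hv
  have hmemB2 : ∀ v ∈ B2, v ∈ B := fun v hv => by rw [← hunion]; exact Or.inr hv
  have hcover : ∀ v : V, v ∈ B1 ∨ v ∈ B2 ∨ v = x ∨ v = y := by
    intro v
    by_cases hv : v ∈ B
    · rw [← hunion] at hv
      rcases hv with hv | hv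
      · exact Or.inl hv
      · exact Or.inr (Or.inl hv)
    · have hv' : v ∈ Bᶜ := hv
      rw [hxyeq] at hv'
      simp only [Set.mem_insert_iff, Set.mem_singleton_iff] at hv'
      exact Or.inr (Or.inr hv')
  -- trace distinctness
  have htr1 : ∀ a ∈ B1, ∀ b ∈ B1, a ≠ b →
      ¬((H.Adj x a ↔ H.Adj x b) ∧ (H.Adj y a ↔ H.Adj y b)) := by
    rintro a ha b hb hab ⟨hx', hy'⟩
    apply htwinfree a b hab
    ext v
    simp only [SimpleGraph.mem_neighborSet]
    rcases hcover v with hv | hv | rfl | rfl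
    · exact iff_of_false (hind1 a ha v hv) (hind1 b hb v hv)
    · exact iff_of_true (hcross a ha v hv) (hcross b hb v hv)
    · rw [H.adj_comm a v, H.adj_comm b v]; exact hx'
    · rw [H.adj_comm a v, H.adj_comm b v]; exact hy'
  have htr2 : ∀ a ∈ B2, ∀ b ∈ B2, a ≠ b →
      ¬((H.Adj x a ↔ H.Adj x b) ∧ (H.Adj y a ↔ H.Adj y b)) := by
    rintro a ha b hb hab ⟨hx', hy'⟩
    apply htwinfree a b hab
    ext v
    simp only [SimpleGraph.mem_neighborSet]
    rcases hcover v with hv | hv | rfl | rfl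
    · exact iff_of_true (hcross v hv a ha).symm (hcross v hv b hb).symm
    · exact iff_of_false (hind2 a ha v hv) (hind2 b hb v hv)
    · rw [H.adj_comm a v, H.adj_comm b v]; exact hx'
    · rw [H.adj_comm a v, H.adj_comm b v]; exact hy'
  have htr1' : ∀ a ∈ B1, ∀ b ∈ B1, a ≠ b →
      ¬((H.Adj y a ↔ H.Adj y b) ∧ (H.Adj x a ↔ H.Adj x b)) :=
    fun a ha b hb hab h => htr1 a ha b hb hab ⟨h.2, h.1⟩
  have htr2' : ∀ a ∈ B2, ∀ b ∈ B2, a ≠ b →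
      ¬((H.Adj y a ↔ H.Adj y b) ∧ (H.Adj x a ↔ H.Adj x b)) :=
    fun a ha b hb hab h => htr2 a ha b hb hab ⟨h.2, h.1⟩
  have hex_xa : ∃ a ∈ B1, H.Adj x a := three_traces h1 _ _ htr1
  have hex_ya : ∃ a ∈ B1, H.Adj y a := three_traces h1 _ _ htr1'
  have hex_xb : ∃ b ∈ B2, H.Adj x b := three_traces h2 _ _ htr2
  have hex_yb : ∃ b ∈ B2, H.Adj y b := three_traces h2 _ _ htr2'
  have hmemT : ∀ (S : Set V) (z u : V), IsBiclique H S → z ∈ S → z ∉ B → u ∈ S → u ∈ B →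
      S ∈ {S : Set V | IsBiclique H S ∧ S ≠ B ∧ (S ∩ B).Nonempty} := by
    intro S z u hS hzS hzB huS huB
    exact ⟨hS, fun h => hzB (h ▸ hzS), ⟨u, huS, huB⟩⟩
  have hfinT : {S : Set V | IsBiclique H S ∧ S ≠ B ∧ (S ∩ B).Nonempty}.Finite :=
    Set.toFinite _
  by_cases hxyadj : H.Adj x y
  · -- Case II : x ~ y
    by_cases hA : ∃ a ∈ B1, H.Adj x a ∧ H.Adj y a
    · -- II.A : some vertex of B1 adjacent to both x and y
      obtain ⟨a, ha, hxa, hya⟩ := hA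
      obtain ⟨b, hb, hxb⟩ := hex_xb
      obtain ⟨d, hd, hyd⟩ := hex_yb
      obtain ⟨S1, hS1, hsub1⟩ := exists_biclique_superset (edge_cbp hxa)
      obtain ⟨S2, hS2, hsub2⟩ := exists_biclique_superset (edge_cbp hxb)
      obtain ⟨S3, hS3, hsub3⟩ := exists_biclique_superset (edge_cbp hya)
      obtain ⟨S4, hS4, hsub4⟩ := exists_biclique_superset (edge_cbp hyd)
      have hxS1 : x ∈ S1 := hsub1 (by simp)
      have haS1 : a ∈ S1 := hsub1 (by simp)
      have hxS2 : x ∈ S2 := hsub2 (by simp)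
      have hbS2 : b ∈ S2 := hsub2 (by simp)
      have hyS3 : y ∈ S3 := hsub3 (by simp)
      have haS3 : a ∈ S3 := hsub3 (by simp)
      have hyS4 : y ∈ S4 := hsub4 (by simp)
      have hdS4 : d ∈ S4 := hsub4 (by simp)
      have h12 : S1 ≠ S2 := by
        intro hEq
        have hbS1 : b ∈ S1 := by rw [hEq]; exact hbS2
        exact cbp_L1 hS1.1 hxS1 haS1 hbS1 hxa hxb (hcross a ha b hb)
      have h13 : S1 ≠ S3 := by
        intro hEq
        have hyS1 : y ∈ S1 := by rw [hEq]; exact hyS3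
        exact cbp_L1 hS1.1 haS1 hxS1 hyS1 hxa.symm hya.symm hxyadj
      have h14 : S1 ≠ S4 := by
        intro hEq
        have hyS1 : y ∈ S1 := by rw [hEq]; exact hyS4
        exact cbp_L1 hS1.1 hyS1 hxS1 haS1 hxyadj.symm hya hxa
      have h23 : S2 ≠ S3 := by
        intro hEq
        have hyS2 : y ∈ S2 := by rw [hEq]; exact hyS3
        have haS2 : a ∈ S2 := by rw [hEq]; exact haS3
        exact cbp_L1 hS2.1 hxS2 hyS2 haS2 hxyadj hxa hya
      have h24 : S2 ≠ S4 := by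
        intro hEq
        have hyS2 : y ∈ S2 := by rw [hEq]; exact hyS4
        have hdS2 : d ∈ S2 := by rw [hEq]; exact hdS4
        by_cases hbd : b = d
        · subst hbd
          exact cbp_L1 hS2.1 hbS2 hxS2 hyS2 hxb.symm hyd.symm hxyadj
        · have hxd : H.Adj x d := cbp_L2 hS2.1 hbS2 hxS2 hdS2 hxb.symm (hind2 b hb d hd)
          exact cbp_L1 hS2.1 hxS2 hyS2 hdS2 hxyadj hxd hyd
      have h34 : S3 ≠ S4 := by
        intro hEq
        have hdS3 : d ∈ S3 := by rw [hEq]; exact hdS4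
        exact cbp_L1 hS3.1 hyS3 haS3 hdS3 hya hyd (hcross a ha d hd)
      exact four_le_ncard hfinT
        (hmemT S1 x a hS1 hxS1 hxB haS1 (hmemB1 a ha))
        (hmemT S2 x b hS2 hxS2 hxB hbS2 (hmemB2 b hb))
        (hmemT S3 y a hS3 hyS3 hyB haS3 (hmemB1 a ha))
        (hmemT S4 y d hS4 hyS4 hyB hdS4 (hmemB2 d hd))
        h12 h13 h14 h23 h24 h34
    · by_cases hBc : ∃ b ∈ B2, H.Adj x b ∧ H.Adj y b
      · -- II.B : some vertex of B2 adjacent to both x and y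
        obtain ⟨b, hb, hxb, hyb⟩ := hBc
        obtain ⟨a, ha, hxa⟩ := hex_xa
        obtain ⟨c, hc, hyc⟩ := hex_ya
        obtain ⟨S1, hS1, hsub1⟩ := exists_biclique_superset (edge_cbp hxa)
        obtain ⟨S2, hS2, hsub2⟩ := exists_biclique_superset (edge_cbp hxb)
        obtain ⟨S3, hS3, hsub3⟩ := exists_biclique_superset (edge_cbp hyc)
        obtain ⟨S4, hS4, hsub4⟩ := exists_biclique_superset (edge_cbp hyb)
        have hxS1 : x ∈ S1 := hsub1 (by simp)
        have haS1 : a ∈ S1 := hsub1 (by simp)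
        have hxS2 : x ∈ S2 := hsub2 (by simp)
        have hbS2 : b ∈ S2 := hsub2 (by simp)
        have hyS3 : y ∈ S3 := hsub3 (by simp)
        have hcS3 : c ∈ S3 := hsub3 (by simp)
        have hyS4 : y ∈ S4 := hsub4 (by simp)
        have hbS4 : b ∈ S4 := hsub4 (by simp)
        have h12 : S1 ≠ S2 := by
          intro hEq
          have hbS1 : b ∈ S1 := by rw [hEq]; exact hbS2
          exact cbp_L1 hS1.1 hxS1 haS1 hbS1 hxa hxb (hcross a ha b hb)
        have h13 : S1 ≠ S3 := by
          intro hEq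
          have hyS1 : y ∈ S1 := by rw [hEq]; exact hyS3
          have hcS1 : c ∈ S1 := by rw [hEq]; exact hcS3
          by_cases hac : a = c
          · subst hac
            exact cbp_L1 hS1.1 haS1 hxS1 hyS1 hxa.symm hyc.symm hxyadj
          · have hxc : H.Adj x c := cbp_L2 hS1.1 haS1 hxS1 hcS1 hxa.symm (hind1 a ha c hc)
            exact cbp_L1 hS1.1 hxS1 hyS1 hcS1 hxyadj hxc hyc
        have h14 : S1 ≠ S4 := by
          intro hEq
          have hyS1 : y ∈ S1 := by rw [hEq]; exact hyS4
          have hbS1 : b ∈ S1 := by rw [hEq]; exact hbS4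
          exact cbp_L1 hS1.1 hxS1 hyS1 hbS1 hxyadj hxb hyb
        have h23 : S2 ≠ S3 := by
          intro hEq
          have hyS2 : y ∈ S2 := by rw [hEq]; exact hyS3
          exact cbp_L1 hS2.1 hyS2 hxS2 hbS2 hxyadj.symm hyb hxb
        have h24 : S2 ≠ S4 := by
          intro hEq
          have hyS2 : y ∈ S2 := by rw [hEq]; exact hyS4
          exact cbp_L1 hS2.1 hbS2 hxS2 hyS2 hxb.symm hyb.symm hxyadj
        have h34 : S3 ≠ S4 := by
          intro hEq
          have hbS3 : b ∈ S3 := by rw [hEq]; exact hbS4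
          exact cbp_L1 hS3.1 hyS3 hcS3 hbS3 hyc hyb (hcross c hc b hb)
        exact four_le_ncard hfinT
          (hmemT S1 x a hS1 hxS1 hxB haS1 (hmemB1 a ha))
          (hmemT S2 x b hS2 hxS2 hxB hbS2 (hmemB2 b hb))
          (hmemT S3 y c hS3 hyS3 hyB hcS3 (hmemB1 c hc))
          (hmemT S4 y b hS4 hyS4 hyB hbS4 (hmemB2 b hb))
          h12 h13 h14 h23 h24 h34
      · -- II.C : no vertex of B is adjacent to both x and y
        push_neg at hA hBc
        obtain ⟨ax', hax', hx_ax⟩ := hex_xa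
        have hy_ax : ¬H.Adj y ax' := hA ax' hax' hx_ax
        obtain ⟨ay', hay', hy_ay⟩ := hex_ya
        have hx_ay : ¬H.Adj x ay' := fun h => hA ay' hay' h hy_ay
        obtain ⟨a0, ha0, hx_a0, hy_a0⟩ :=
          three_traces_empty h1 _ _ htr1 (fun a ha h => hA a ha h.1 h.2)
        obtain ⟨bx', hbx', hx_bx⟩ := hex_xb
        have hy_bx : ¬H.Adj y bx' := hBc bx' hbx' hx_bx
        obtain ⟨by', hby', hy_by⟩ := hex_yb
        have hx_by : ¬H.Adj x by' := fun h => hBc by' hby' h hy_by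
        obtain ⟨b0, hb0, hx_b0, hy_b0⟩ :=
          three_traces_empty h2 _ _ htr2 (fun b hb h => hBc b hb h.1 h.2)
        obtain ⟨S1, hS1, hsub1⟩ := exists_biclique_superset
          (path_cbp hx_ax.symm (hcross ax' hax' b0 hb0) hx_b0)
        obtain ⟨S2, hS2, hsub2⟩ := exists_biclique_superset
          (path_cbp hx_bx.symm (hcross a0 ha0 bx' hbx').symm hx_a0)
        obtain ⟨S3, hS3, hsub3⟩ := exists_biclique_superset
          (path_cbp hy_ay.symm (hcross ay' hay' b0 hb0) hy_b0)
        obtain ⟨S4, hS4, hsub4⟩ := exists_biclique_superset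
          (path_cbp hy_by.symm (hcross a0 ha0 by' hby').symm hy_a0)
        have haxS1 : ax' ∈ S1 := hsub1 (by simp)
        have hxS1 : x ∈ S1 := hsub1 (by simp)
        have hb0S1 : b0 ∈ S1 := hsub1 (by simp)
        have hbxS2 : bx' ∈ S2 := hsub2 (by simp)
        have hxS2 : x ∈ S2 := hsub2 (by simp)
        have ha0S2 : a0 ∈ S2 := hsub2 (by simp)
        have hayS3 : ay' ∈ S3 := hsub3 (by simp)
        have hyS3 : y ∈ S3 := hsub3 (by simp)
        have hb0S3 : b0 ∈ S3 := hsub3 (by simp)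
        have hbyS4 : by' ∈ S4 := hsub4 (by simp)
        have hyS4 : y ∈ S4 := hsub4 (by simp)
        have ha0S4 : a0 ∈ S4 := hsub4 (by simp)
        have h12 : S1 ≠ S2 := by
          intro hEq
          have hbxS1 : bx' ∈ S1 := by rw [hEq]; exact hbxS2
          exact cbp_L1 hS1.1 hxS1 haxS1 hbxS1 hx_ax hx_bx (hcross ax' hax' bx' hbx')
        have h13 : S1 ≠ S3 := by
          intro hEq
          have hayS1 : ay' ∈ S1 := by rw [hEq]; exact hayS3
          exact hind1 ax' hax' ay' hay' (cbp_L2 hS1.1 hxS1 haxS1 hayS1 hx_ax hx_ay)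
        have h14 : S1 ≠ S4 := by
          intro hEq
          have hyS1 : y ∈ S1 := by rw [hEq]; exact hyS4
          have hadj : H.Adj ax' y := cbp_L2 hS1.1 hb0S1 haxS1 hyS1
            (hcross ax' hax' b0 hb0).symm (fun h => hy_b0 h.symm)
          exact hy_ax hadj.symm
        have h23 : S2 ≠ S3 := by
          intro hEq
          have hyS2 : y ∈ S2 := by rw [hEq]; exact hyS3
          have hadj : H.Adj bx' y := cbp_L2 hS2.1 ha0S2 hbxS2 hyS2
            (hcross a0 ha0 bx' hbx') (fun h => hy_a0 h.symm)
          exact hy_bx hadj.symm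
        have h24 : S2 ≠ S4 := by
          intro hEq
          have hbyS2 : by' ∈ S2 := by rw [hEq]; exact hbyS4
          exact hind2 bx' hbx' by' hby' (cbp_L2 hS2.1 hxS2 hbxS2 hbyS2 hx_bx hx_by)
        have h34 : S3 ≠ S4 := by
          intro hEq
          have hbyS3 : by' ∈ S3 := by rw [hEq]; exact hbyS4
          exact cbp_L1 hS3.1 hyS3 hayS3 hbyS3 hy_ay hy_by (hcross ay' hay' by' hby')
        exact four_le_ncard hfinT
          (hmemT S1 x ax' hS1 hxS1 hxB haxS1 (hmemB1 ax' hax'))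
          (hmemT S2 x bx' hS2 hxS2 hxB hbxS2 (hmemB2 bx' hbx'))
          (hmemT S3 y ay' hS3 hyS3 hyB hayS3 (hmemB1 ay' hay'))
          (hmemT S4 y by' hS4 hyS4 hyB hbyS4 (hmemB2 by' hby'))
          h12 h13 h14 h23 h24 h34
  · -- Case I : x ≁ y
    obtain ⟨a, ha, c, hc, hxa, hyc, hac, hdisj1⟩ := three_pair h1 _ _ htr1
    obtain ⟨b, hb, d, hd, hxb, hyd, hbd, hdisj2⟩ := three_pair h2 _ _ htr2
    obtain ⟨S1, hS1, hsub1⟩ := exists_biclique_superset (edge_cbp hxa)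
    obtain ⟨S2, hS2, hsub2⟩ := exists_biclique_superset (edge_cbp hxb)
    obtain ⟨S3, hS3, hsub3⟩ := exists_biclique_superset (edge_cbp hyc)
    obtain ⟨S4, hS4, hsub4⟩ := exists_biclique_superset (edge_cbp hyd)
    have hxS1 : x ∈ S1 := hsub1 (by simp)
    have haS1 : a ∈ S1 := hsub1 (by simp)
    have hxS2 : x ∈ S2 := hsub2 (by simp)
    have hbS2 : b ∈ S2 := hsub2 (by simp)
    have hyS3 : y ∈ S3 := hsub3 (by simp)
    have hcS3 : c ∈ S3 := hsub3 (by simp)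
    have hyS4 : y ∈ S4 := hsub4 (by simp)
    have hdS4 : d ∈ S4 := hsub4 (by simp)
    have h12 : S1 ≠ S2 := by
      intro hEq
      have hbS1 : b ∈ S1 := by rw [hEq]; exact hbS2
      exact cbp_L1 hS1.1 hxS1 haS1 hbS1 hxa hxb (hcross a ha b hb)
    have h13 : S1 ≠ S3 := by
      intro hEq
      have hyS1 : y ∈ S1 := by rw [hEq]; exact hyS3
      have hcS1 : c ∈ S1 := by rw [hEq]; exact hcS3
      rcases hdisj1 with hxc | hya
      · exact hind1 a ha c hc (cbp_L2 hS1.1 hxS1 haS1 hcS1 hxa hxc)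
      · exact hind1 c hc a ha (cbp_L2 hS1.1 hyS1 hcS1 haS1 hyc hya)
    have h14 : S1 ≠ S4 := by
      intro hEq
      have hyS1 : y ∈ S1 := by rw [hEq]; exact hyS4
      have hdS1 : d ∈ S1 := by rw [hEq]; exact hdS4
      have hxd : ¬H.Adj x d :=
        cbp_L1 hS1.1 haS1 hxS1 hdS1 hxa.symm (hcross a ha d hd)
      have hyx : H.Adj y x :=
        cbp_L2 hS1.1 hdS1 hyS1 hxS1 hyd.symm (fun h => hxd h.symm)
      exact hxyadj hyx.symm
    have h23 : S2 ≠ S3 := by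
      intro hEq
      have hyS2 : y ∈ S2 := by rw [hEq]; exact hyS3
      have hcS2 : c ∈ S2 := by rw [hEq]; exact hcS3
      have hxc : ¬H.Adj x c :=
        cbp_L1 hS2.1 hbS2 hxS2 hcS2 hxb.symm (hcross c hc b hb).symm
      have hyx : H.Adj y x :=
        cbp_L2 hS2.1 hcS2 hyS2 hxS2 hyc.symm (fun h => hxc h.symm)
      exact hxyadj hyx.symm
    have h24 : S2 ≠ S4 := by
      intro hEq
      have hyS2 : y ∈ S2 := by rw [hEq]; exact hyS4
      have hdS2 : d ∈ S2 := by rw [hEq]; exact hdS4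
      rcases hdisj2 with hxd | hyb
      · exact hind2 b hb d hd (cbp_L2 hS2.1 hxS2 hbS2 hdS2 hxb hxd)
      · exact hind2 d hd b hb (cbp_L2 hS2.1 hyS2 hdS2 hbS2 hyd hyb)
    have h34 : S3 ≠ S4 := by
      intro hEq
      have hdS3 : d ∈ S3 := by rw [hEq]; exact hdS4
      exact cbp_L1 hS3.1 hyS3 hcS3 hdS3 hyc hyd (hcross c hc d hd)
    exact four_le_ncard hfinT
      (hmemT S1 x a hS1 hxS1 hxB haS1 (hmemB1 a ha))
      (hmemT S2 x b hS2 hxS2 hxB hbS2 (hmemB2 b hb))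
      (hmemT S3 y c hS3 hyS3 hyB hcS3 (hmemB1 c hc))
      (hmemT S4 y d hS4 hyS4 hyB hdS4 (hmemB2 d hd))
      h12 h13 h14 h23 h24 h34
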